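/- A real Banach space X (of dimension ≥ 2) is a Hilbert space (its norm is induced by an inner product) if and only if for every unit vector x, the pair (x, x) is a CPP with CPP constant (r, 1) for every r > 0. -/

import Mathlib

open Metric

/-- Birkhoff-James orthogonality: `x ⊥_B y` iff `‖x + t y‖ ≥ ‖x‖` for all real `t`. -/
def BJOrth {X : Type*} [NormedAddCommGroup X] [NormedSpace ℝ X] (x y : X) : Prop :=
  ∀ t : ℝ, ‖x‖ ≤ ‖x + t • y‖

/-- `(x, y)` is a compatible point pair with constant `(r, μ)`. -/
def IsCPPConst {X Y : Type*} [NormedAddCommGroup X] [NormedSpace ℝ X]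
    [NormedAddCommGroup Y] [NormedSpace ℝ Y] (x : X) (y : Y) (r μ : ℝ) : Prop :=
  ∀ z : X, ‖z‖ = 1 → BJOrth x z → ∀ w : Y, ‖w‖ = 1 → BJOrth y w →
    ∀ a b : ℝ, ‖a • x + b • z - x‖ ≤ r → ‖a • x + b • z‖ = 1 →
      ‖a • y + (b * μ) • w‖ ≤ 1

/-- `(x, y)` is a compatible point pair (CPP). -/
def IsCPP {X Y : Type*} [NormedAddCommGroup X] [NormedSpace ℝ X]
    [NormedAddCommGroup Y] [NormedSpace ℝ Y] (x : X) (y : Y) : Prop :=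
  ∃ r > 0, ∃ μ > 0, IsCPPConst x y r μ

/-- `(x, y)` is a weakly compatible point pair (weak CPP). -/
def IsWeakCPP {X Y : Type*} [NormedAddCommGroup X] [NormedSpace ℝ X]
    [NormedAddCommGroup Y] [NormedSpace ℝ Y] (x : X) (y : Y) : Prop :=
  ∃ z : X, ‖z‖ = 1 ∧ BJOrth x z ∧ ∃ w : Y, ‖w‖ = 1 ∧ BJOrth y w ∧
    ∃ r > 0, ∃ μ > 0, ∀ a b : ℝ, ‖a • x + b • z - x‖ ≤ r → ‖a • x + b • z‖ = 1 →
      ‖a • y + (b * μ) • w‖ ≤ 1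

/-- A normed space is smooth if every unit vector has a unique supporting functional. -/
def SmoothSp (X : Type*) [NormedAddCommGroup X] [NormedSpace ℝ X] : Prop :=
  ∀ x : X, ‖x‖ = 1 → ∃! f : X →L[ℝ] ℝ, ‖f‖ = 1 ∧ f x = 1

section Basic
variable {X : Type*} [NormedAddCommGroup X] [NormedSpace ℝ X]

lemma bj_zero_left (y : X) : BJOrth 0 y := by
  intro t; simp

lemma bj_zero_right (x : X) : BJOrth x 0 := by
  intro t; simp

lemma bj_smul_right {x y : X} (h : BJOrth x y) (c : ℝ) : BJOrth x (c • y) := by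
  intro t
  have := h (t * c)
  simpa [smul_smul] using this

lemma bj_neg_right {x y : X} (h : BJOrth x y) : BJOrth x (-y) := by
  simpa using bj_smul_right h (-1)

lemma bj_smul_left {x y : X} (h : BJOrth x y) (c : ℝ) : BJOrth (c • x) y := by
  rcases eq_or_ne c 0 with rfl | hc
  · simpa using bj_zero_left y
  · intro t
    have h2 := h (t / c)
    have : c • x + t • y = c • (x + (t / c) • y) := by
      rw [smul_add, smul_smul]
      congr 1
      field_simp
    rw [this, norm_smul, norm_smul]
    exact mul_le_mul_of_nonneg_left h2 (abs_nonneg c)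

lemma bj_of_dual {x v : X} (f : X →L[ℝ] ℝ) (hf : ‖f‖ = 1) (hfx : f x = ‖x‖)
    (hfv : f v = 0) : BJOrth x v := by
  intro t
  calc ‖x‖ = f (x + t • v) := by
        rw [map_add, map_smul, hfv, smul_zero, add_zero, hfx]
    _ ≤ ‖f (x + t • v)‖ := le_abs_self _
    _ ≤ ‖f‖ * ‖x + t • v‖ := f.le_opNorm _
    _ = ‖x + t • v‖ := by rw [hf, one_mul]

/-- existence of a BJ companion on an affine line -/
lemma bj_companion {x : X} (hx : x ≠ 0) (y : X) : ∃ α : ℝ, BJOrth x (α • x + y) := by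
  obtain ⟨f, hf1, hfx⟩ := exists_dual_vector ℝ x (norm_ne_zero_iff.mpr hx)
  refine ⟨-(f y) / ‖x‖, bj_of_dual f hf1 hfx ?_⟩
  have hnx : (‖x‖ : ℝ) ≠ 0 := by simpa using hx
  rw [map_add, map_smul, hfx]
  simp only [RCLike.ofReal_real_eq_id, id, smul_eq_mul]
  field_simp
  ring


lemma unit_indep {x z : X} (hx : ‖x‖ = 1) (hz : ‖z‖ = 1) (hxz : BJOrth x z)
    {a b : ℝ} (hab : a • x + b • z = 0) : a = 0 ∧ b = 0 := by
  have hb : b = 0 := by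
    by_contra hb
    have hzx : z = (-(a/b)) • x := by
      have : b • z = -(a • x) := by
        rw [eq_neg_iff_add_eq_zero, add_comm]; exact hab
      have h2 := congrArg (fun v => (b⁻¹ : ℝ) • v) this
      simp only [smul_smul, inv_mul_cancel₀ hb, one_smul, smul_neg] at h2
      have h3 : -(b⁻¹*a) = -(a/b) := by field_simp
      rw [h2, ← neg_smul, h3]
    set c : ℝ := -(a/b) with hc
    have hc1 : |c| = 1 := by
      have := hz
      rw [hzx, norm_smul, hx, mul_one] at this
      exact this
    have hcne : c ≠ 0 := by
      intro h; rw [h] at hc1; simp at hc1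
    have := hxz (-(1/c))
    rw [hzx, smul_smul] at this
    have heq : (-(1/c)) * c = -1 := by field_simp
    rw [heq] at this
    simp only [neg_smul, one_smul, add_neg_cancel, norm_zero] at this
    rw [hx] at this; linarith
  refine ⟨?_, hb⟩
  rw [hb, zero_smul, add_zero] at hab
  have := congrArg norm hab
  rw [norm_smul, hx, mul_one, norm_zero] at this
  simpa using this

/-- Key consequence of the hypothesis: the norm of `a•x+b•z` does not depend on
which unit vector `z` BJ-orthogonal to `x` is used. -/
lemma keyA (hH : ∀ x : X, ‖x‖ = 1 → ∀ r : ℝ, 0 < r → IsCPPConst x x r 1)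
    {x z w : X} (hx : ‖x‖ = 1) (hz : ‖z‖ = 1) (hw : ‖w‖ = 1)
    (hxz : BJOrth x z) (hxw : BJOrth x w) (a b : ℝ) :
    ‖a • x + b • w‖ ≤ ‖a • x + b • z‖ := by
  set s := ‖a • x + b • z‖ with hs
  rcases eq_or_lt_of_le (norm_nonneg (a • x + b • z)) with h0 | hpos
  · -- s = 0
    have hab := unit_indep hx hz hxz (norm_eq_zero.mp h0.symm)
    rw [hab.1, hab.2]
    simp only [zero_smul, add_zero, norm_zero]
    exact norm_nonneg _
  · set r : ℝ := ‖(a/s) • x + (b/s) • z - x‖ + 1 with hr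
    have hrpos : 0 < r := by positivity
    have hsne : s ≠ 0 := ne_of_gt hpos
    have hnorm1 : ‖(a/s) • x + (b/s) • z‖ = 1 := by
      have : (a/s) • x + (b/s) • z = s⁻¹ • (a • x + b • z) := by
        rw [smul_add, smul_smul, smul_smul]
        congr 1 <;> (congr 1; field_simp)
      rw [this, norm_smul, ← hs, norm_inv, Real.norm_eq_abs, abs_of_pos hpos]
      field_simp
      exact hs
    have hdist : ‖(a/s) • x + (b/s) • z - x‖ ≤ r := by
      rw [hr]; linarith [norm_nonneg ((a/s) • x + (b/s) • z - x)]
    have hkey := hH x hx r hrpos z hz hxz w hw hxw (a/s) (b/s) hdist hnorm1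
    rw [mul_one] at hkey
    have hfac : a • x + b • w = s • ((a/s) • x + (b/s) • w) := by
      rw [smul_add, smul_smul, smul_smul]
      congr 1 <;> (congr 1; field_simp)
    calc ‖a • x + b • w‖ = s * ‖(a/s) • x + (b/s) • w‖ := by
          rw [hfac, norm_smul, Real.norm_eq_abs, abs_of_pos hpos]
      _ ≤ s * 1 := by
          exact mul_le_mul_of_nonneg_left hkey (le_of_lt hpos)
      _ = s := mul_one s

lemma keyEq (hH : ∀ x : X, ‖x‖ = 1 → ∀ r : ℝ, 0 < r → IsCPPConst x x r 1)
    {x z w : X} (hx : ‖x‖ = 1) (hz : ‖z‖ = 1) (hw : ‖w‖ = 1)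
    (hxz : BJOrth x z) (hxw : BJOrth x w) (a b : ℝ) :
    ‖a • x + b • w‖ = ‖a • x + b • z‖ :=
  le_antisymm (keyA hH hx hz hw hxz hxw a b) (keyA hH hx hw hz hxw hxz a b)

/-- isosceles property: BJ orthogonality implies the norm is even in the second slot. -/
lemma iso (hH : ∀ x : X, ‖x‖ = 1 → ∀ r : ℝ, 0 < r → IsCPPConst x x r 1)
    {x y : X} (hxy : BJOrth x y) (a b : ℝ) :
    ‖a • x + b • y‖ = ‖a • x - b • y‖ := by
  rcases eq_or_ne x 0 with rfl | hx0
  · simp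
  rcases eq_or_ne y 0 with rfl | hy0
  · simp
  set xh := (‖x‖:ℝ)⁻¹ • x with hxh
  set yh := (‖y‖:ℝ)⁻¹ • y with hyh
  have hnx : (0:ℝ) < ‖x‖ := norm_pos_iff.mpr hx0
  have hny : (0:ℝ) < ‖y‖ := norm_pos_iff.mpr hy0
  have hxh1 : ‖xh‖ = 1 := by
    rw [hxh, norm_smul, norm_inv, Real.norm_eq_abs, abs_of_pos hnx]
    field_simp
  have hyh1 : ‖yh‖ = 1 := by
    rw [hyh, norm_smul, norm_inv, Real.norm_eq_abs, abs_of_pos hny]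
    field_simp
  have hbj : BJOrth xh yh := bj_smul_left (bj_smul_right hxy _) _
  have hbj2 : BJOrth xh (-yh) := bj_neg_right hbj
  have hyneg : ‖-yh‖ = 1 := by rw [norm_neg]; exact hyh1
  have h := keyEq hH hxh1 hyh1 hyneg hbj hbj2 (a * ‖x‖) (b * ‖y‖)
  have e1 : (a * ‖x‖) • xh = a • x := by
    rw [hxh, smul_smul]; congr 1; field_simp
  have e2 : (b * ‖y‖) • yh = b • y := by
    rw [hyh, smul_smul]; congr 1; field_simp
  have e3 : (b * ‖y‖) • (-yh) = -(b • y) := by rw [smul_neg, e2]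
  rw [e1, e2, e3, ← sub_eq_add_neg] at h
  exact h.symm

/-- flatness is impossible: the unit sphere is strictly convex. -/
lemma strict_conv (hH : ∀ x : X, ‖x‖ = 1 → ∀ r : ℝ, 0 < r → IsCPPConst x x r 1)
    {v₁ v₂ : X} (h1 : ‖v₁‖ = 1) (h2 : ‖v₂‖ = 1) (hsum : ‖v₁ + v₂‖ = 2) :
    v₁ = v₂ := by
  by_contra hne
  set d := v₂ - v₁ with hd
  have hd0 : d ≠ 0 := sub_ne_zero_of_ne (Ne.symm hne)
  have hm0 : v₁ + v₂ ≠ 0 := by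
    intro h; rw [h, norm_zero] at hsum; norm_num at hsum
  obtain ⟨f, hf1, hfm⟩ := exists_dual_vector ℝ (v₁ + v₂) (norm_ne_zero_iff.mpr hm0)
  rw [hsum] at hfm
  have hfv1 : f v₁ ≤ 1 := by
    calc f v₁ ≤ ‖f v₁‖ := le_abs_self _
      _ ≤ ‖f‖ * ‖v₁‖ := f.le_opNorm _
      _ = 1 := by rw [hf1, h1, one_mul]
  have hfv2 : f v₂ ≤ 1 := by
    calc f v₂ ≤ ‖f v₂‖ := le_abs_self _
      _ ≤ ‖f‖ * ‖v₂‖ := f.le_opNorm _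
      _ = 1 := by rw [hf1, h2, one_mul]
  have hsum2 : f v₁ + f v₂ = 2 := by rw [← map_add]; exact hfm
  have hfv1' : f v₁ = 1 := by linarith
  have hfv2' : f v₂ = 1 := by linarith
  have hfd : f d = 0 := by rw [hd, map_sub, hfv1', hfv2', sub_self]
  -- all points v₁ + k • d have norm 1
  have key : ∀ k : ℕ, ‖v₁ + (k:ℝ) • d‖ = 1 ∧ ‖v₁ + ((k:ℝ)+1) • d‖ = 1 := by
    intro k
    induction k with
    | zero =>
      constructor
      · simpa using h1
      · simpa [hd] using h2
    | succ n ih =>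
      obtain ⟨ihk, ihk1⟩ := ih
      refine ⟨by simpa [add_comm] using ihk1, ?_⟩
      set u := v₁ + ((n:ℝ)+1) • d with hu
      have hfu : f u = 1 := by
        rw [hu, map_add, map_smul, hfd, smul_zero, add_zero, hfv1']
      have hbju : BJOrth u d := by
        refine bj_of_dual f hf1 ?_ hfd
        rw [hfu, ihk1]
      have hisos := iso hH hbju 1 1
      simp only [one_smul] at hisos
      have hminus : u - d = v₁ + (n:ℝ) • d := by
        rw [hu, hd]; abel_nf; rw [add_smul, one_smul]; abel
      have hplus : u + d = v₁ + (((n:ℝ)+1)+1) • d := by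
        rw [hu, add_smul ((n:ℝ)+1) 1 d, one_smul]; abel
      rw [hminus] at hisos
      push_cast
      rw [← hplus, hisos, ihk]
  -- contradiction: norms blow up
  have hdn : (0:ℝ) < ‖d‖ := norm_pos_iff.mpr hd0
  obtain ⟨k, hk⟩ := exists_nat_gt (2 / ‖d‖)
  have hk2 : 2 < (k:ℝ) * ‖d‖ := by
    rw [div_lt_iff₀ hdn] at hk; linarith
  have hnk := (key k).1
  have : (k:ℝ) * ‖d‖ - 1 ≤ ‖v₁ + (k:ℝ) • d‖ := by
    have h3 : ‖(k:ℝ) • d‖ - ‖v₁‖ ≤ ‖v₁ + (k:ℝ) • d‖ := by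
      have := norm_sub_norm_le ((k:ℝ) • d) (-v₁)
      simpa [sub_neg_eq_add, add_comm] using this
    rw [norm_smul, Real.norm_eq_abs, abs_of_nonneg (Nat.cast_nonneg k), h1] at h3
    exact h3
  rw [hnk] at this
  linarith

/-- convexity of `s ↦ ‖s•x+y‖` along lines -/
lemma norm_line_convex (x y : X) {s t θ : ℝ} (h0 : 0 ≤ θ) (h1 : θ ≤ 1) :
    ‖(θ*s + (1-θ)*t) • x + y‖ ≤ θ * ‖s • x + y‖ + (1-θ) * ‖t • x + y‖ := by
  have hrep : (θ*s + (1-θ)*t) • x + y = θ • (s • x + y) + (1-θ) • (t • x + y) := by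
    module
  rw [hrep]
  calc ‖θ • (s • x + y) + (1-θ) • (t • x + y)‖
      ≤ ‖θ • (s • x + y)‖ + ‖(1-θ) • (t • x + y)‖ := norm_add_le _ _
    _ = θ * ‖s • x + y‖ + (1-θ) * ‖t • x + y‖ := by
        rw [norm_smul, norm_smul, Real.norm_eq_abs, Real.norm_eq_abs,
          abs_of_nonneg h0, abs_of_nonneg (by linarith)]

/-- majorization inequality for convex functions along lines -/
lemma norm_line_maj (x y : X) {a b u v : ℝ} (hau : a ≤ u) (hub : u ≤ b)
    (hsum : u + v = a + b) :
    ‖u • x + y‖ + ‖v • x + y‖ ≤ ‖a • x + y‖ + ‖b • x + y‖ := by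
  rcases eq_or_lt_of_le (hau.trans hub) with heq | hab
  · have hu : u = a := le_antisymm (heq ▸ hub) hau
    have hv : v = b := by linarith
    rw [hu, hv]
  · set θ := (b - u)/(b - a) with hθ
    have hba : (0:ℝ) < b - a := by linarith
    have h0 : 0 ≤ θ := by
      rw [hθ]; apply div_nonneg <;> linarith
    have h1 : θ ≤ 1 := by
      rw [hθ, div_le_one hba]; linarith
    have hu : u = θ*a + (1-θ)*b := by
      rw [hθ]; field_simp; ring
    have hv : v = θ*b + (1-θ)*a := by
      have : v = a + b - u := by linarith
      rw [this, hu]; ring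
    calc ‖u • x + y‖ + ‖v • x + y‖
        ≤ (θ * ‖a • x + y‖ + (1-θ) * ‖b • x + y‖)
          + (θ * ‖b • x + y‖ + (1-θ) * ‖a • x + y‖) := by
          gcongr ?_ + ?_
          · rw [hu]; exact norm_line_convex x y h0 h1
          · rw [hv]
            have := norm_line_convex x y (s := b) (t := a) h0 h1
            exact this
      _ = ‖a • x + y‖ + ‖b • x + y‖ := by ring

/-- uniqueness of isosceles companions -/
lemma uniqueI (hH : ∀ x : X, ‖x‖ = 1 → ∀ r : ℝ, 0 < r → IsCPPConst x x r 1)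
    {x y : X} (hx : x ≠ 0) {α β : ℝ}
    (hα : ‖x + (α • x + y)‖ = ‖x - (α • x + y)‖)
    (hβ : ‖x + (β • x + y)‖ = ‖x - (β • x + y)‖) : α = β := by
  have conv : ∀ γ : ℝ, ‖x + (γ • x + y)‖ = ‖x - (γ • x + y)‖ →
      ‖(γ+1) • x + y‖ = ‖(γ-1) • x + y‖ := by
    intro γ h
    have e1 : x + (γ • x + y) = (γ+1) • x + y := by module
    have e2 : x - (γ • x + y) = -((γ-1) • x + y) := by module
    rw [e1, e2, norm_neg] at h
    exact h
  have aux : ∀ α β : ℝ, ‖(α+1) • x + y‖ = ‖(α-1) • x + y‖ →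
      ‖(β+1) • x + y‖ = ‖(β-1) • x + y‖ → α < β → False := by
    clear hα hβ α β
    intro α β hα hβ hlt
    set M := ‖(α+1) • x + y‖ with hM
    have hMα : ‖(α-1) • x + y‖ = M := hα.symm
    -- flatness between α and β
    have flat : ∀ t, α ≤ t → t ≤ β → ‖(t+1) • x + y‖ = ‖(t-1) • x + y‖ := by
      intro t h1t h2t
      have m1 := norm_line_maj x y (a := α-1) (b := t+1) (u := t-1) (v := α+1)
        (by linarith) (by linarith) (by ring)
      have m2 := norm_line_maj x y (a := t-1) (b := β+1) (u := t+1) (v := β-1)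
        (by linarith) (by linarith) (by ring)
      rw [hMα, ← hM] at m1
      rw [hβ] at m2
      linarith
    have hub : ∀ s, α-1 ≤ s → s ≤ α+1 → ‖s • x + y‖ ≤ M := by
      intro s hs1 hs2
      set θ := (α+1-s)/2 with hθ
      have h0 : 0 ≤ θ := by rw [hθ]; linarith
      have h1 : θ ≤ 1 := by rw [hθ]; linarith
      have hrep : s = θ*(α-1) + (1-θ)*(α+1) := by rw [hθ]; ring
      calc ‖s • x + y‖ = ‖(θ*(α-1) + (1-θ)*(α+1)) • x + y‖ := by rw [← hrep]
        _ ≤ θ * ‖(α-1) • x + y‖ + (1-θ) * ‖(α+1) • x + y‖ :=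
            norm_line_convex x y h0 h1
        _ = M := by rw [hMα, ← hM]; ring
    set t₀ := min β (α+2) with ht₀
    have htα : α < t₀ := lt_min hlt (by linarith)
    have hflat₀ : ‖(t₀+1) • x + y‖ = ‖(t₀-1) • x + y‖ :=
      flat t₀ (le_of_lt htα) (min_le_left _ _)
    have gconst : ∀ s, α-1 ≤ s → s ≤ α+1 → ‖s • x + y‖ = M := by
      intro s hs1 hs2
      refine le_antisymm (hub s hs1 hs2) ?_
      by_contra hlt2
      push_neg at hlt2
      set θ := (t₀-α)/(t₀+1-s) with hθ
      have hd : (0:ℝ) < t₀+1-s := by linarith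
      have h0 : 0 < θ := by apply div_pos <;> linarith
      have h1 : θ ≤ 1 := by
        rw [hθ, div_le_one hd]; linarith
      have hrep : (α+1:ℝ) = θ*s + (1-θ)*(t₀+1) := by
        rw [hθ]; field_simp; ring
      have hc := norm_line_convex x y (s := s) (t := t₀+1) (le_of_lt h0) h1
      rw [← hrep] at hc
      have hmr : t₀ ≤ α + 2 := min_le_right _ _
      have ht1 : ‖(t₀+1) • x + y‖ ≤ M := by
        rw [hflat₀]
        exact hub _ (by linarith) (by linarith)
      have hMc : M ≤ θ * ‖s • x + y‖ + (1-θ) * ‖(t₀+1) • x + y‖ := by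
        rw [hM]; exact hc
      nlinarith [hMc, ht1, hlt2, h0, h1]
    have hM0 : 0 < M := by
      rcases eq_or_lt_of_le (norm_nonneg ((α+1) • x + y)) with h0 | h
      · exfalso
        have e1 : (α+1) • x + y = 0 := norm_eq_zero.mp h0.symm
        have e2 : (α-1) • x + y = 0 := by
          have h4 : ‖(α-1) • x + y‖ = 0 := by rw [hMα, hM, ← h0]
          exact norm_eq_zero.mp h4
        have h5 : (2:ℝ) • x = 0 := by
          have h6 := sub_eq_zero_of_eq (e1.trans e2.symm)
          have h3 : (α+1) • x + y - ((α-1) • x + y) = (2:ℝ) • x := by module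
          rw [h3] at h6; exact h6
        have : x = 0 := by
          simpa using smul_eq_zero.mp h5
        exact hx this
      · exact hM ▸ h
    -- build flat segment and contradict strict convexity
    set v₁ := M⁻¹ • ((α-1) • x + y) with hv₁
    set v₂ := M⁻¹ • ((α+1) • x + y) with hv₂
    have hn1 : ‖v₁‖ = 1 := by
      rw [hv₁, norm_smul, Real.norm_eq_abs, abs_of_pos (inv_pos.mpr hM0), hMα]
      field_simp
    have hn2 : ‖v₂‖ = 1 := by
      rw [hv₂, norm_smul, Real.norm_eq_abs, abs_of_pos (inv_pos.mpr hM0), ← hM]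
      field_simp
    have hnsum : ‖v₁ + v₂‖ = 2 := by
      have hrep : v₁ + v₂ = (2*M⁻¹) • (α • x + y) := by
        rw [hv₁, hv₂]; module
      rw [hrep, norm_smul, Real.norm_eq_abs]
      have hgα : ‖α • x + y‖ = M := gconst α (by linarith) (by linarith)
      rw [hgα, abs_of_pos (by positivity)]
      field_simp
    have := strict_conv hH hn1 hn2 hnsum
    rw [hv₁, hv₂] at this
    have h2 : (α-1) • x + y = (α+1) • x + y := by
      have hMne : (M:ℝ)⁻¹ ≠ 0 := inv_ne_zero (ne_of_gt hM0)
      exact smul_right_injective X hMne this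
    have h3 : (2:ℝ) • x = 0 := by
      have := sub_eq_zero_of_eq h2.symm
      have h4 : (α+1) • x + y - ((α-1) • x + y) = (2:ℝ) • x := by module
      rw [h4] at this; exact this
    exact hx (by simpa using smul_eq_zero.mp h3)
  have hα' := conv α hα
  have hβ' := conv β hβ
  rcases lt_trichotomy α β with h | h | h
  · exact absurd (aux α β hα' hβ' h) (fun f => f.elim)
  · exact h
  · exact absurd (aux β α hβ' hα' h) (fun f => f.elim)

/-- isosceles orthogonality implies BJ orthogonality -/
lemma isoToBJ (hH : ∀ x : X, ‖x‖ = 1 → ∀ r : ℝ, 0 < r → IsCPPConst x x r 1)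
    {x y : X} (h : ‖x + y‖ = ‖x - y‖) : BJOrth x y := by
  rcases eq_or_ne x 0 with rfl | hx0
  · exact bj_zero_left y
  obtain ⟨α, hbj⟩ := bj_companion hx0 y
  have h1 : ‖x + (α • x + y)‖ = ‖x - (α • x + y)‖ := by
    have := iso hH hbj 1 1
    simpa using this
  have h0 : ‖x + ((0:ℝ) • x + y)‖ = ‖x - ((0:ℝ) • x + y)‖ := by
    simpa using h
  have := uniqueI hH hx0 h1 h0
  rw [this] at hbj
  simpa using hbj

/-- Ficken-type swap symmetry -/
lemma swap (hH : ∀ x : X, ‖x‖ = 1 → ∀ r : ℝ, 0 < r → IsCPPConst x x r 1)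
    {u w : X} (h : ‖u‖ = ‖w‖) (α β : ℝ) :
    ‖α • u + β • w‖ = ‖β • u + α • w‖ := by
  have hpq : ‖(u+w) + (u-w)‖ = ‖(u+w) - (u-w)‖ := by
    have e1 : (u+w) + (u-w) = (2:ℝ) • u := by module
    have e2 : (u+w) - (u-w) = (2:ℝ) • w := by module
    rw [e1, e2, norm_smul, norm_smul, h]
  have hbj := isoToBJ hH hpq
  have hiso := iso hH hbj ((α+β)/2) ((α-β)/2)
  have e3 : ((α+β)/2) • (u+w) + ((α-β)/2) • (u-w) = α • u + β • w := by module
  have e4 : ((α+β)/2) • (u+w) - ((α-β)/2) • (u-w) = β • u + α • w := by module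
  rw [e3, e4] at hiso
  exact hiso

/-- smoothness at a unit vector in a BJ-orthogonal direction -/
lemma smooth (hH : ∀ x : X, ‖x‖ = 1 → ∀ r : ℝ, 0 < r → IsCPPConst x x r 1)
    {x y : X} (hx : ‖x‖ = 1) (hxy : BJOrth x y)
    {ε : ℝ} (hε : 0 < ε) : ∃ u : ℝ, 0 < u ∧ ‖x + u • y‖ ≤ 1 + ε * u := by
  by_contra hcon
  push_neg at hcon
  have hcon' : ∀ u : ℝ, 0 < u → 1 + ε * u < ‖x + u • y‖ := by
    intro u hu
    exact hcon u hu
  have key : ∀ a b : ℝ, |a| + ε * |b| ≤ ‖a • x + b • y‖ := by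
    intro a b
    rcases eq_or_ne b 0 with rfl | hb
    · simp [norm_smul, hx]
    rcases eq_or_ne a 0 with rfl | ha
    · have hεy : ε ≤ ‖y‖ := by
        have h1 := hcon' 1 one_pos
        have h2 : ‖x + (1:ℝ) • y‖ ≤ 1 + ‖y‖ := by
          calc ‖x + (1:ℝ) • y‖ ≤ ‖x‖ + ‖(1:ℝ) • y‖ := norm_add_le _ _
            _ = 1 + ‖y‖ := by rw [hx, one_smul]
        linarith
      rw [zero_smul, zero_add, norm_smul, Real.norm_eq_abs]
      have : ε * |b| ≤ ‖y‖ * |b| := mul_le_mul_of_nonneg_right hεy (abs_nonneg b)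
      simp only [abs_zero, zero_add]
      linarith [this, mul_comm (|b|) (‖y‖)]
    · have hba : a • x + b • y = a • (x + (b/a) • y) := by
        rw [smul_add, smul_smul]
        congr 2
        field_simp
      have habs : ‖x + (b/a) • y‖ = ‖x + |b/a| • y‖ := by
        rcases le_or_gt 0 (b/a) with h' | h'
        · rw [abs_of_nonneg h']
        · have := iso hH hxy 1 (b/a)
          simp only [one_smul] at this
          rw [abs_of_neg h', this, neg_smul, ← sub_eq_add_neg]
      have hpos : 0 < |b/a| := abs_pos.mpr (div_ne_zero hb ha)
      have h1 := hcon' _ hpos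
      calc |a| + ε * |b| = |a| * (1 + ε * |b/a|) := by
            rw [abs_div]
            field_simp
        _ ≤ |a| * ‖x + |b/a| • y‖ := by
            apply mul_le_mul_of_nonneg_left _ (abs_nonneg a)
            linarith [h1]
        _ = ‖a • x + b • y‖ := by
            rw [hba, norm_smul, Real.norm_eq_abs, habs]
  have hx0 : x ≠ 0 := by
    intro h; rw [h, norm_zero] at hx; norm_num at hx
  have hbj1 : BJOrth x (ε • x + y) := by
    intro t
    have e : x + t • (ε • x + y) = (1 + t*ε) • x + t • y := by module
    rw [e, hx]
    have := key (1 + t*ε) t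
    have h2 : (1:ℝ) ≤ |1 + t*ε| + ε * |t| := by
      have a1 : 1 + t*ε ≤ |1 + t*ε| := le_abs_self _
      have a2 : ε * (-t) ≤ ε * |t| := mul_le_mul_of_nonneg_left (neg_le_abs t) (le_of_lt hε)
      nlinarith
    linarith
  have hbj2 : BJOrth x ((-ε) • x + y) := by
    intro t
    have e : x + t • ((-ε) • x + y) = (1 - t*ε) • x + t • y := by module
    rw [e, hx]
    have := key (1 - t*ε) t
    have h2 : (1:ℝ) ≤ |1 - t*ε| + ε * |t| := by
      have a1 : 1 - t*ε ≤ |1 - t*ε| := le_abs_self _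
      have a2 : ε * t ≤ ε * |t| := mul_le_mul_of_nonneg_left (le_abs_self t) (le_of_lt hε)
      nlinarith
    linarith
  have h1 : ‖x + (ε • x + y)‖ = ‖x - (ε • x + y)‖ := by
    simpa using iso hH hbj1 1 1
  have h2 : ‖x + ((-ε) • x + y)‖ = ‖x - ((-ε) • x + y)‖ := by
    simpa using iso hH hbj2 1 1
  have := uniqueI hH hx0 h1 h2
  linarith

lemma homog (x y : X) {t : ℝ} (ht : 0 < t) (a b : ℝ) :
    ‖(t*a) • x + (t*b) • y‖ = t * ‖a • x + b • y‖ := by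
  have e : (t*a) • x + (t*b) • y = t • (a • x + b • y) := by module
  rw [e, norm_smul, Real.norm_eq_abs, abs_of_pos ht]

lemma norm_line_convex2 (x y : X) {s t θ : ℝ} (h0 : 0 ≤ θ) (h1 : θ ≤ 1) :
    ‖x + (θ*s + (1-θ)*t) • y‖ ≤ θ * ‖x + s • y‖ + (1-θ) * ‖x + t • y‖ := by
  have hrep : x + (θ*s + (1-θ)*t) • y = θ • (x + s • y) + (1-θ) • (x + t • y) := by
    module
  rw [hrep]
  calc ‖θ • (x + s • y) + (1-θ) • (x + t • y)‖
      ≤ ‖θ • (x + s • y)‖ + ‖(1-θ) • (x + t • y)‖ := norm_add_le _ _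
    _ = θ * ‖x + s • y‖ + (1-θ) * ‖x + t • y‖ := by
        rw [norm_smul, norm_smul, Real.norm_eq_abs, Real.norm_eq_abs,
          abs_of_nonneg h0, abs_of_nonneg (by linarith)]

lemma ev2 (hH : ∀ x : X, ‖x‖ = 1 → ∀ r : ℝ, 0 < r → IsCPPConst x x r 1)
    {x y : X} (hxy : BJOrth x y) (p q : ℝ) :
    ‖p • x + q • y‖ = ‖p • x + (-q) • y‖ := by
  rw [iso hH hxy p q, neg_smul, ← sub_eq_add_neg]

lemma ev1 (hH : ∀ x : X, ‖x‖ = 1 → ∀ r : ℝ, 0 < r → IsCPPConst x x r 1)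
    {x y : X} (hxy : BJOrth x y) (p q : ℝ) :
    ‖p • x + q • y‖ = ‖(-p) • x + q • y‖ := by
  have h1 : (-p) • x + q • y = -(p • x + (-q) • y) := by module
  rw [h1, norm_neg]
  exact ev2 hH hxy p q

lemma lowbd1 {x y : X} (hx : ‖x‖ = 1) (hxy : BJOrth x y) (p q : ℝ) :
    |p| ≤ ‖p • x + q • y‖ := by
  rcases eq_or_ne p 0 with rfl | hp
  · simpa using norm_nonneg ((0:ℝ) • x + q • y)
  · have e : p • x + q • y = p • (x + (q/p) • y) := by
      rw [smul_add, smul_smul]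
      congr 2
      field_simp
    rw [e, norm_smul, Real.norm_eq_abs]
    have h1 := hxy (q/p)
    rw [hx] at h1
    nlinarith [abs_nonneg p]

lemma lowbd2 {x y : X} (hyx : BJOrth y x) (p q : ℝ) :
    |q| * ‖y‖ ≤ ‖p • x + q • y‖ := by
  rcases eq_or_ne q 0 with rfl | hq
  · simpa using norm_nonneg (p • x + (0:ℝ) • y)
  · have e : p • x + q • y = q • (y + (p/q) • x) := by
      rw [smul_add, smul_smul]
      have : q * (p/q) = p := by field_simp
      rw [this]
      abel
    rw [e, norm_smul, Real.norm_eq_abs]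
    have h1 := hyx (p/q)
    nlinarith [abs_nonneg q, norm_nonneg y]

lemma smooth1 (hH : ∀ x : X, ‖x‖ = 1 → ∀ r : ℝ, 0 < r → IsCPPConst x x r 1)
    {x y : X} (hx : ‖x‖ = 1) (hxy : BJOrth x y)
    {ε δ : ℝ} (hε : 0 < ε) (hδ : 0 < δ) :
    ∃ u : ℝ, 0 < u ∧ u ≤ δ ∧ ‖x + u • y‖ ≤ 1 + ε * u := by
  obtain ⟨u, hu0, hub⟩ := smooth hH hx hxy hε
  refine ⟨min u δ, lt_min hu0 hδ, min_le_right _ _, ?_⟩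
  set θ := (min u δ)/u with hθ
  have hθ0 : 0 ≤ θ := by
    rw [hθ]; positivity
  have hθ1 : θ ≤ 1 := by
    rw [hθ, div_le_one hu0]; exact min_le_left _ _
  have hθu : θ * u = min u δ := by
    rw [hθ]; field_simp
  have hrep : x + (min u δ) • y = (1-θ) • x + θ • (x + u • y) := by
    rw [← hθu]; module
  calc ‖x + (min u δ) • y‖ = ‖(1-θ) • x + θ • (x + u • y)‖ := by rw [hrep]
    _ ≤ ‖(1-θ) • x‖ + ‖θ • (x + u • y)‖ := norm_add_le _ _
    _ = (1-θ) * 1 + θ * ‖x + u • y‖ := by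
        rw [norm_smul, norm_smul, Real.norm_eq_abs, Real.norm_eq_abs,
          abs_of_nonneg hθ0, abs_of_nonneg (by linarith), hx]
    _ ≤ (1-θ) + θ * (1 + ε * u) := by
        have := mul_le_mul_of_nonneg_left hub hθ0
        linarith
    _ = 1 + ε * (θ * u) := by ring
    _ = 1 + ε * (min u δ) := by rw [hθu]

lemma smooth2 (hH : ∀ x : X, ‖x‖ = 1 → ∀ r : ℝ, 0 < r → IsCPPConst x x r 1)
    {x y : X} (hy : y ≠ 0) (hyx : BJOrth y x)
    {ε δ : ℝ} (hε : 0 < ε) (hδ : 0 < δ) :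
    ∃ v : ℝ, 0 < v ∧ v ≤ δ ∧ ‖v • x + y‖ ≤ ‖y‖ + ε * v := by
  set μ := ‖y‖ with hμ
  have hμ0 : 0 < μ := norm_pos_iff.mpr hy
  have hyh : ‖(μ⁻¹) • y‖ = 1 := by
    rw [norm_smul, Real.norm_eq_abs, abs_of_pos (inv_pos.mpr hμ0), ← hμ]
    field_simp
  have hbj : BJOrth ((μ⁻¹) • y) x := bj_smul_left hyx μ⁻¹
  obtain ⟨u, hu0, hud, hub⟩ := smooth1 hH hyh hbj hε (div_pos hδ hμ0)
  refine ⟨μ * u, by positivity, ?_, ?_⟩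
  · calc μ * u ≤ μ * (δ/μ) := mul_le_mul_of_nonneg_left hud (le_of_lt hμ0)
      _ = δ := by field_simp
  · have e : (μ*u) • x + y = μ • ((μ⁻¹) • y + u • x) := by
      rw [smul_add, smul_smul, smul_smul, mul_inv_cancel₀ (ne_of_gt hμ0), one_smul]
      abel
    rw [e, norm_smul, Real.norm_eq_abs, abs_of_pos hμ0]
    calc μ * ‖(μ⁻¹) • y + u • x‖ ≤ μ * (1 + ε * u) := by
          exact mul_le_mul_of_nonneg_left hub (le_of_lt hμ0)
      _ = μ + ε * (μ * u) := by ring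

lemma identE (hH : ∀ x : X, ‖x‖ = 1 → ∀ r : ℝ, 0 < r → IsCPPConst x x r 1)
    {x y : X} (hx : ‖x‖ = 1) {c : ℝ} (hc : ‖x + y‖ = c) (hc0 : 0 < c) (α : ℝ) :
    ‖(α*c+1) • x + y‖ = ‖(c+α) • x + α • y‖ := by
  have hcne : c ≠ 0 := ne_of_gt hc0
  have hw1 : ‖c⁻¹ • (x+y)‖ = 1 := by
    rw [norm_smul, Real.norm_eq_abs, abs_of_pos (inv_pos.mpr hc0), hc]
    field_simp
  have hsw := swap hH (u := x) (w := c⁻¹ • (x+y)) (by rw [hx, hw1]) (α*c) c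
  have l0 : c • (c⁻¹ • (x+y)) = x + y := by
    rw [smul_smul, mul_inv_cancel₀ hcne, one_smul]
  have l2 : (α*c) • (c⁻¹ • (x+y)) = α • (x+y) := by
    rw [smul_smul]
    congr 1
    field_simp
  rw [l0, l2] at hsw
  have l1 : (α*c) • x + (x + y) = (α*c+1) • x + y := by module
  have l3 : c • x + α • (x+y) = (c+α) • x + α • y := by module
  rw [l1, l3] at hsw
  exact hsw

lemma identE' (hH : ∀ x : X, ‖x‖ = 1 → ∀ r : ℝ, 0 < r → IsCPPConst x x r 1)
    {x y : X} {c μ : ℝ} (hc : ‖x + y‖ = c) (hc0 : 0 < c)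
    (hμ : ‖y‖ = μ) (hμ0 : 0 < μ) (a : ℝ) :
    ‖μ • x + (a*c+μ) • y‖ = ‖(a*μ) • x + (c+a*μ) • y‖ := by
  have hcne : c ≠ 0 := ne_of_gt hc0
  have hμne : μ ≠ 0 := ne_of_gt hμ0
  have hw1 : ‖c⁻¹ • (x+y)‖ = 1 := by
    rw [norm_smul, Real.norm_eq_abs, abs_of_pos (inv_pos.mpr hc0), hc]
    field_simp
  have hu1 : ‖μ⁻¹ • y‖ = 1 := by
    rw [norm_smul, Real.norm_eq_abs, abs_of_pos (inv_pos.mpr hμ0), hμ]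
    field_simp
  have hsw := swap hH (u := μ⁻¹ • y) (w := c⁻¹ • (x+y)) (by rw [hu1, hw1]) (a*c*μ) (μ*c)
  have m1 : (a*c*μ) • (μ⁻¹ • y) = (a*c) • y := by
    rw [smul_smul]; congr 1; field_simp
  have m2 : (μ*c) • (c⁻¹ • (x+y)) = μ • (x+y) := by
    rw [smul_smul]; congr 1; field_simp
  have m4 : (μ*c) • (μ⁻¹ • y) = c • y := by
    rw [smul_smul]; congr 1; field_simp
  have m5 : (a*c*μ) • (c⁻¹ • (x+y)) = (a*μ) • (x+y) := by
    rw [smul_smul]; congr 1; field_simp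
  rw [m1, m2, m4, m5] at hsw
  have m3 : (a*c) • y + μ • (x+y) = μ • x + (a*c+μ) • y := by module
  have m6 : c • y + (a*μ) • (x+y) = (a*μ) • x + (c+a*μ) • y := by module
  rw [m3, m6] at hsw
  exact hsw

set_option maxHeartbeats 1600000 in
lemma pyth_upper (hH : ∀ x : X, ‖x‖ = 1 → ∀ r : ℝ, 0 < r → IsCPPConst x x r 1)
    {x y : X} (hx : ‖x‖ = 1) (hy : y ≠ 0) (hxy : BJOrth x y) (hyx : BJOrth y x)
    {c μ : ℝ} (hc : ‖x + y‖ = c) (hc0 : 0 < c) (hμ : ‖y‖ = μ) (hμ0 : 0 < μ)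
    {ε : ℝ} (hε : 0 < ε) : c*c ≤ 1 + μ*μ + ε*(1+μ) := by
  obtain ⟨u₀, hu0, hud, hubd⟩ := smooth1 hH hx hxy hε (show (0:ℝ) < 1/2 by norm_num)
  obtain ⟨v₀, hv0, hvd, hvbd⟩ := smooth2 hH hy hyx hε (show (0:ℝ) < 1/2 by norm_num)
  rw [hμ] at hvbd
  have hu1 : u₀ < 1 := by linarith
  have hv1 : v₀ < 1 := by linarith
  set α := (1-u₀)/(c*u₀) with hαd
  clear_value α
  have hα0 : 0 < α := by rw [hαd]; exact div_pos (by linarith) (by positivity)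
  set h := c/α with hhd
  clear_value h
  have hh0 : 0 < h := by rw [hhd]; exact div_pos hc0 hα0
  have hinv : α*c + 1 = 1/u₀ := by
    first
      | (rw [hαd]; field_simp [hc0.ne', hu0.ne']; ring)
      | (rw [hαd]; field_simp [hc0.ne', hu0.ne'])
  have hA : α * ‖(1+h) • x + y‖ ≤ α*c + 1 + ε := by
    have e1 : α*(1+h) = c + α := by
      rw [hhd]; first
      | (field_simp [hc0.ne', hμ0.ne', hu0.ne', hv0.ne', hα0.ne']; ring)
      | field_simp [hc0.ne', hμ0.ne', hu0.ne', hv0.ne', hα0.ne']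
    have e2 : α • ((1+h) • x + y) = (c+α) • x + α • y := by
      rw [smul_add, smul_smul, e1]
    have e3 : (α*c+1) • x + y = (1/u₀) • (x + u₀ • y) := by
      rw [hinv, smul_add, smul_smul, one_div, inv_mul_cancel₀ (ne_of_gt hu0), one_smul]
    calc α * ‖(1+h) • x + y‖ = ‖(c+α) • x + α • y‖ := by
          rw [← e2, norm_smul, Real.norm_eq_abs, abs_of_pos hα0]
      _ = ‖(α*c+1) • x + y‖ := (identE hH hx hc hc0 α).symm
      _ = (1/u₀) * ‖x + u₀ • y‖ := by
          rw [e3, norm_smul, Real.norm_eq_abs, abs_of_pos (by positivity)]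
      _ ≤ (1/u₀) * (1 + ε*u₀) := mul_le_mul_of_nonneg_left hubd (by positivity)
      _ = α*c + 1 + ε := by
          rw [hinv]; first
      | (field_simp [hc0.ne', hμ0.ne', hu0.ne', hv0.ne', hα0.ne']; ring)
      | field_simp [hc0.ne', hμ0.ne', hu0.ne', hv0.ne', hα0.ne']
  set a := μ*(1-v₀)/(c*v₀) with had
  clear_value a
  have ha0 : 0 < a := by rw [had]; exact div_pos (mul_pos hμ0 (by linarith)) (by positivity)
  set h2 := c/(a*μ) with h2d
  clear_value h2
  have h20 : 0 < h2 := by rw [h2d]; exact div_pos hc0 (by positivity)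
  have hainv : a*c + μ = μ/v₀ := by
    rw [had]; first
      | (field_simp [hc0.ne', hμ0.ne', hu0.ne', hv0.ne', hα0.ne']; ring)
      | field_simp [hc0.ne', hμ0.ne', hu0.ne', hv0.ne', hα0.ne']
  have hB : (a*μ) * ‖x + (1+h2) • y‖ ≤ a*μ*c + μ*μ + ε*μ := by
    have e1 : (a*μ)*(1+h2) = c + a*μ := by
      rw [h2d]; first
      | (field_simp [hc0.ne', hμ0.ne', hu0.ne', hv0.ne', hα0.ne', ha0.ne']; ring)
      | field_simp [hc0.ne', hμ0.ne', hu0.ne', hv0.ne', hα0.ne', ha0.ne']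
    have e2 : (a*μ) • (x + (1+h2) • y) = (a*μ) • x + (c+a*μ) • y := by
      rw [smul_add, smul_smul, e1]
    have e3 : μ • x + (a*c+μ) • y = (μ/v₀) • (v₀ • x + y) := by
      rw [hainv, smul_add, smul_smul]
      have hvv : μ/v₀ * v₀ = μ := by field_simp [hv0.ne']
      rw [hvv]
    have h5 : (a*c+μ)*v₀ = μ := by
      rw [hainv]; field_simp [hv0.ne']
    calc (a*μ) * ‖x + (1+h2) • y‖ = ‖(a*μ) • x + (c+a*μ) • y‖ := by
          rw [← e2, norm_smul, Real.norm_eq_abs, abs_of_pos (by positivity)]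
      _ = ‖μ • x + (a*c+μ) • y‖ := (identE' hH hc hc0 hμ hμ0 a).symm
      _ = (μ/v₀) * ‖v₀ • x + y‖ := by
          rw [e3, norm_smul, Real.norm_eq_abs, abs_of_pos (by positivity)]
      _ ≤ (μ/v₀) * (μ + ε*v₀) := mul_le_mul_of_nonneg_left hvbd (by positivity)
      _ = a*μ*c + μ*μ + ε*μ := by
          rw [show μ/v₀ = a*c + μ from hainv.symm]
          linear_combination ε * h5
  set m := min h h2 with hmd
  clear_value m
  have hm0 : 0 < m := by rw [hmd]; exact lt_min hh0 h20
  have hmh : m ≤ h := by rw [hmd]; exact min_le_left _ _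
  have hmh2 : m ≤ h2 := by rw [hmd]; exact min_le_right _ _
  have hcnorm : ‖(1:ℝ) • x + y‖ = c := by rw [one_smul]; exact hc
  have hcnorm2 : ‖x + (1:ℝ) • y‖ = c := by rw [one_smul]; exact hc
  have monA : ‖(1+m) • x + y‖ ≤ c + (m/h) * (‖(1+h) • x + y‖ - c) := by
    have hθ0 : 0 ≤ m/h := le_of_lt (div_pos hm0 hh0)
    have hθ1 : m/h ≤ 1 := (div_le_one hh0).mpr hmh
    have hcx := norm_line_convex x y (s := 1+h) (t := 1) hθ0 hθ1
    have hrep : (m/h)*(1+h) + (1-(m/h))*1 = 1+m := by first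
      | (field_simp [hc0.ne', hμ0.ne', hu0.ne', hv0.ne', hα0.ne', hh0.ne', hm0.ne']; ring)
      | field_simp [hc0.ne', hμ0.ne', hu0.ne', hv0.ne', hα0.ne', hh0.ne', hm0.ne']
    rw [hrep, hcnorm] at hcx
    linarith
  have monB : ‖x + (1+m) • y‖ ≤ c + (m/h2) * (‖x + (1+h2) • y‖ - c) := by
    have hθ0 : 0 ≤ m/h2 := le_of_lt (div_pos hm0 h20)
    have hθ1 : m/h2 ≤ 1 := (div_le_one h20).mpr hmh2
    have hcx := norm_line_convex2 x y (s := 1+h2) (t := 1) hθ0 hθ1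
    have hrep : (m/h2)*(1+h2) + (1-(m/h2))*1 = 1+m := by first
      | (field_simp [hc0.ne', hμ0.ne', hu0.ne', hv0.ne', hα0.ne', h20.ne', hm0.ne']; ring)
      | field_simp [hc0.ne', hμ0.ne', hu0.ne', hv0.ne', hα0.ne', h20.ne', hm0.ne']
    rw [hrep, hcnorm2] at hcx
    linarith
  have mid : (2+m)*c ≤ ‖(1+m) • x + y‖ + ‖x + (1+m) • y‖ := by
    have e : (1+m) • x + y + (x + (1+m) • y) = (2+m) • (x+y) := by module
    have h6 := norm_add_le ((1+m) • x + y) (x + (1+m) • y)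
    rw [e, norm_smul, Real.norm_eq_abs, abs_of_pos (by linarith : (0:ℝ) < 2+m), hc] at h6
    exact h6
  have bA : (m/h) * (‖(1+h) • x + y‖ - c) ≤ m*(1+ε)/c := by
    have h7 : ‖(1+h) • x + y‖ ≤ (α*c+1+ε)/α := by
      rw [le_div_iff₀ hα0, mul_comm]
      exact hA
    have h8 : (α*c+1+ε)/α = c + h*(1+ε)/c := by
      rw [hhd]; first
      | (field_simp [hc0.ne', hμ0.ne', hu0.ne', hv0.ne', hα0.ne']; ring)
      | field_simp [hc0.ne', hμ0.ne', hu0.ne', hv0.ne', hα0.ne']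
    rw [h8] at h7
    calc (m/h)*(‖(1+h) • x + y‖ - c) ≤ (m/h)*(h*(1+ε)/c) := by
          apply mul_le_mul_of_nonneg_left _ (le_of_lt (div_pos hm0 hh0))
          linarith
      _ = m*(1+ε)/c := by first
      | (field_simp [hc0.ne', hμ0.ne', hu0.ne', hv0.ne', hα0.ne', hh0.ne', hm0.ne']; ring)
      | field_simp [hc0.ne', hμ0.ne', hu0.ne', hv0.ne', hα0.ne', hh0.ne', hm0.ne']
  have bB : (m/h2) * (‖x + (1+h2) • y‖ - c) ≤ m*(μ*μ+ε*μ)/c := by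
    have h7 : ‖x + (1+h2) • y‖ ≤ (a*μ*c+μ*μ+ε*μ)/(a*μ) := by
      rw [le_div_iff₀ (by positivity : (0:ℝ) < a*μ), mul_comm]
      exact hB
    have h8 : (a*μ*c+μ*μ+ε*μ)/(a*μ) = c + h2*(μ*μ+ε*μ)/c := by
      rw [h2d]; first
      | (field_simp [hc0.ne', hμ0.ne', hu0.ne', hv0.ne', hα0.ne', ha0.ne']; ring)
      | field_simp [hc0.ne', hμ0.ne', hu0.ne', hv0.ne', hα0.ne', ha0.ne']
    rw [h8] at h7
    calc (m/h2)*(‖x + (1+h2) • y‖ - c) ≤ (m/h2)*(h2*(μ*μ+ε*μ)/c) := by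
          apply mul_le_mul_of_nonneg_left _ (le_of_lt (div_pos hm0 h20))
          linarith
      _ = m*(μ*μ+ε*μ)/c := by first
      | (field_simp [hc0.ne', hμ0.ne', hu0.ne', hv0.ne', hα0.ne', h20.ne', hm0.ne']; ring)
      | field_simp [hc0.ne', hμ0.ne', hu0.ne', hv0.ne', hα0.ne', h20.ne', hm0.ne']
  have hfin : m*c ≤ m*(1+ε)/c + m*(μ*μ+ε*μ)/c := by
    nlinarith [monA, monB, mid, bA, bB]
  have hfin2 : m*(c*c) ≤ m*(1 + μ*μ + ε*(1+μ)) := by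
    have h10 : (m*(1+ε)/c + m*(μ*μ+ε*μ)/c)*c = m*(1 + μ*μ + ε*(1+μ)) := by
      first
      | (field_simp [hc0.ne', hμ0.ne', hu0.ne', hv0.ne', hα0.ne']; ring)
      | field_simp [hc0.ne', hμ0.ne', hu0.ne', hv0.ne', hα0.ne']
    calc m*(c*c) = (m*c)*c := by ring
      _ ≤ (m*(1+ε)/c + m*(μ*μ+ε*μ)/c)*c :=
          mul_le_mul_of_nonneg_right hfin (le_of_lt hc0)
      _ = m*(1 + μ*μ + ε*(1+μ)) := h10
  exact le_of_mul_le_mul_left hfin2 hm0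

lemma evboth (x y : X) (p q : ℝ) : ‖p • x + q • y‖ = ‖(-p) • x + (-q) • y‖ := by
  have e : (-p) • x + (-q) • y = -(p • x + q • y) := by module
  rw [e, norm_neg]

set_option maxHeartbeats 1600000 in
lemma pyth_lower (hH : ∀ x : X, ‖x‖ = 1 → ∀ r : ℝ, 0 < r → IsCPPConst x x r 1)
    {x y : X} (hx : ‖x‖ = 1) (hy : y ≠ 0) (hxy : BJOrth x y) (hyx : BJOrth y x)
    {c μ : ℝ} (hc : ‖x + y‖ = c) (hc0 : 0 < c) (hμ : ‖y‖ = μ) (hμ0 : 0 < μ)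
    {ε : ℝ} (hε : 0 < ε) : 1 + μ*μ - ε*(1+μ) ≤ c*c := by
  obtain ⟨u₀, hu0, hud, hubd⟩ := smooth1 hH hx hxy hε (show (0:ℝ) < 1/2 by norm_num)
  obtain ⟨v₀, hv0, hvd, hvbd⟩ := smooth2 hH hy hyx hε (show (0:ℝ) < 1/2 by norm_num)
  rw [hμ] at hvbd
  set a := (1+u₀)/(c*u₀) with had
  clear_value a
  have ha0 : 0 < a := by rw [had]; exact div_pos (by linarith) (by positivity)
  set h := c/a with hhd
  clear_value h
  have hh0 : 0 < h := by rw [hhd]; exact div_pos hc0 ha0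
  have hinv : a*c - 1 = 1/u₀ := by
    first
      | (rw [had]; field_simp [hc0.ne', hu0.ne']; ring)
      | (rw [had]; field_simp [hc0.ne', hu0.ne'])
  have hA : a * ‖(1-h) • x + y‖ ≤ a*c - 1 + ε := by
    have e1 : a*(1-h) = a - c := by
      first
      | (rw [hhd]; field_simp [ha0.ne']; ring)
      | (rw [hhd]; field_simp [ha0.ne'])
    have e2 : a • ((1-h) • x + y) = (a-c) • x + a • y := by
      rw [smul_add, smul_smul, e1]
    have idE := identE hH hx hc hc0 (-a)
    have s1 : ‖((-a)*c+1) • x + y‖ = ‖(a*c-1) • x + y‖ := by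
      have e4 : ((-a)*c+1 : ℝ) = -(a*c-1) := by ring
      rw [e4]
      have e5 := ev1 hH hxy (a*c-1) 1
      simp only [one_smul] at e5
      exact e5.symm
    have s2 : ‖(c + -a) • x + (-a) • y‖ = ‖(a-c) • x + a • y‖ := by
      have e6 := evboth x y (c + -a) (-a)
      rw [e6]
      congr 2 <;> ring
    rw [s1, s2] at idE
    have s3 : ‖(a*c-1) • x + y‖ = (1/u₀) * ‖x + u₀ • y‖ := by
      have e7 : (a*c-1) • x + y = (1/u₀) • (x + u₀ • y) := by
        rw [hinv, smul_add, smul_smul, one_div, inv_mul_cancel₀ (ne_of_gt hu0), one_smul]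
      rw [e7, norm_smul, Real.norm_eq_abs, abs_of_pos (by positivity)]
    calc a * ‖(1-h) • x + y‖ = ‖(a-c) • x + a • y‖ := by
          rw [← e2, norm_smul, Real.norm_eq_abs, abs_of_pos ha0]
      _ = ‖(a*c-1) • x + y‖ := idE.symm
      _ = (1/u₀) * ‖x + u₀ • y‖ := s3
      _ ≤ (1/u₀) * (1 + ε*u₀) := mul_le_mul_of_nonneg_left hubd (by positivity)
      _ = a*c - 1 + ε := by
          rw [hinv]
          first
          | (field_simp [hu0.ne']; ring)
          | field_simp [hu0.ne']
  set a2 := μ*(1+v₀)/(c*v₀) with had2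
  clear_value a2
  have ha20 : 0 < a2 := by
    rw [had2]; exact div_pos (mul_pos hμ0 (by linarith)) (by positivity)
  set h2 := c/(a2*μ) with h2d
  clear_value h2
  have h20 : 0 < h2 := by rw [h2d]; exact div_pos hc0 (by positivity)
  have hainv : a2*c - μ = μ/v₀ := by
    first
      | (rw [had2]; field_simp [hc0.ne', hμ0.ne', hv0.ne']; ring)
      | (rw [had2]; field_simp [hc0.ne', hμ0.ne', hv0.ne'])
  have hB : (a2*μ) * ‖x + (1-h2) • y‖ ≤ a2*μ*c - μ*μ + ε*μ := by
    have e1 : (a2*μ)*(1-h2) = a2*μ - c := by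
      first
      | (rw [h2d]; field_simp [ha20.ne', hμ0.ne']; ring)
      | (rw [h2d]; field_simp [ha20.ne', hμ0.ne'])
    have e2 : (a2*μ) • (x + (1-h2) • y) = (a2*μ) • x + (a2*μ-c) • y := by
      rw [smul_add, smul_smul, e1]
    have idE := identE' hH hc hc0 hμ hμ0 (-a2)
    have s1 : ‖μ • x + ((-a2)*c+μ) • y‖ = ‖μ • x + (a2*c-μ) • y‖ := by
      have e4 : ((-a2)*c+μ : ℝ) = -(a2*c-μ) := by ring
      rw [e4]
      exact (ev2 hH hxy μ (a2*c-μ)).symm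
    have s2 : ‖((-a2)*μ) • x + (c+(-a2)*μ) • y‖ = ‖(a2*μ) • x + (a2*μ-c) • y‖ := by
      have e6 := evboth x y ((-a2)*μ) (c+(-a2)*μ)
      rw [e6]
      congr 2 <;> ring
    rw [s1, s2] at idE
    have s3 : ‖μ • x + (a2*c-μ) • y‖ = (μ/v₀) * ‖v₀ • x + y‖ := by
      have e7 : μ • x + (a2*c-μ) • y = (μ/v₀) • (v₀ • x + y) := by
        rw [hainv, smul_add, smul_smul]
        have hvv : μ/v₀ * v₀ = μ := by field_simp [hv0.ne']
        rw [hvv]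
      rw [e7, norm_smul, Real.norm_eq_abs, abs_of_pos (by positivity)]
    have h5 : (a2*c-μ)*v₀ = μ := by
      rw [hainv]; field_simp [hv0.ne']
    calc (a2*μ) * ‖x + (1-h2) • y‖ = ‖(a2*μ) • x + (a2*μ-c) • y‖ := by
          rw [← e2, norm_smul, Real.norm_eq_abs, abs_of_pos (by positivity)]
      _ = ‖μ • x + (a2*c-μ) • y‖ := idE.symm
      _ = (μ/v₀) * ‖v₀ • x + y‖ := s3
      _ ≤ (μ/v₀) * (μ + ε*v₀) := mul_le_mul_of_nonneg_left hvbd (by positivity)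
      _ = a2*μ*c - μ*μ + ε*μ := by
          rw [show μ/v₀ = a2*c - μ from hainv.symm]
          linear_combination ε * h5
  set m := min (min h h2) 1 with hmd
  clear_value m
  have hm0 : 0 < m := by
    rw [hmd]; exact lt_min (lt_min hh0 h20) one_pos
  have hmh : m ≤ h := by rw [hmd]; exact le_trans (min_le_left _ _) (min_le_left _ _)
  have hmh2 : m ≤ h2 := by rw [hmd]; exact le_trans (min_le_left _ _) (min_le_right _ _)
  have hm1 : m ≤ 1 := by rw [hmd]; exact min_le_right _ _
  have hcnorm : ‖(1:ℝ) • x + y‖ = c := by rw [one_smul]; exact hc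
  have hcnorm2 : ‖x + (1:ℝ) • y‖ = c := by rw [one_smul]; exact hc
  have monA : (m/h) * (c - ‖(1-h) • x + y‖) ≤ c - ‖(1-m) • x + y‖ := by
    have hθ0 : 0 ≤ m/h := le_of_lt (div_pos hm0 hh0)
    have hθ1 : m/h ≤ 1 := (div_le_one hh0).mpr hmh
    have hcx := norm_line_convex x y (s := 1-h) (t := 1) hθ0 hθ1
    have hrep : (m/h)*(1-h) + (1-(m/h))*1 = 1-m := by
      first
      | (field_simp [hh0.ne']; ring)
      | field_simp [hh0.ne']
    rw [hrep, hcnorm] at hcx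
    linarith
  have monB : (m/h2) * (c - ‖x + (1-h2) • y‖) ≤ c - ‖x + (1-m) • y‖ := by
    have hθ0 : 0 ≤ m/h2 := le_of_lt (div_pos hm0 h20)
    have hθ1 : m/h2 ≤ 1 := (div_le_one h20).mpr hmh2
    have hcx := norm_line_convex2 x y (s := 1-h2) (t := 1) hθ0 hθ1
    have hrep : (m/h2)*(1-h2) + (1-(m/h2))*1 = 1-m := by
      first
      | (field_simp [h20.ne']; ring)
      | field_simp [h20.ne']
    rw [hrep, hcnorm2] at hcx
    linarith
  have mid : (2-m)*c ≤ ‖(1-m) • x + y‖ + ‖x + (1-m) • y‖ := by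
    have e : (1-m) • x + y + (x + (1-m) • y) = (2-m) • (x+y) := by module
    have h6 := norm_add_le ((1-m) • x + y) (x + (1-m) • y)
    rw [e, norm_smul, Real.norm_eq_abs, abs_of_pos (by linarith : (0:ℝ) < 2-m), hc] at h6
    exact h6
  have bA : m*(1-ε)/c ≤ (m/h) * (c - ‖(1-h) • x + y‖) := by
    have h7 : (a*c-1+ε)/a = c - (1-ε)/a := by
      first
      | (field_simp [ha0.ne']; ring)
      | field_simp [ha0.ne']
    have h8 : ‖(1-h) • x + y‖ ≤ (a*c-1+ε)/a := by
      rw [le_div_iff₀ ha0, mul_comm]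
      exact hA
    rw [h7] at h8
    have h9 : (1-ε)/a = h*(1-ε)/c := by
      first
      | (rw [hhd]; field_simp [ha0.ne', hc0.ne']; ring)
      | (rw [hhd]; field_simp [ha0.ne', hc0.ne'])
    have h10 : (m/h)*(h*(1-ε)/c) ≤ (m/h)*(c - ‖(1-h) • x + y‖) := by
      apply mul_le_mul_of_nonneg_left _ (le_of_lt (div_pos hm0 hh0))
      rw [← h9]
      linarith
    have h11 : (m/h)*(h*(1-ε)/c) = m*(1-ε)/c := by
      first
      | (field_simp [hh0.ne', hc0.ne']; ring)
      | field_simp [hh0.ne', hc0.ne']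
    linarith
  have bB : m*(μ*μ-ε*μ)/c ≤ (m/h2) * (c - ‖x + (1-h2) • y‖) := by
    have h7 : (a2*μ*c-μ*μ+ε*μ)/(a2*μ) = c - (μ*μ-ε*μ)/(a2*μ) := by
      first
      | (field_simp [ha20.ne', hμ0.ne']; ring)
      | field_simp [ha20.ne', hμ0.ne']
    have h8 : ‖x + (1-h2) • y‖ ≤ (a2*μ*c-μ*μ+ε*μ)/(a2*μ) := by
      rw [le_div_iff₀ (by positivity : (0:ℝ) < a2*μ), mul_comm]
      exact hB
    rw [h7] at h8
    have h9 : (μ*μ-ε*μ)/(a2*μ) = h2*(μ*μ-ε*μ)/c := by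
      first
      | (rw [h2d]; field_simp [ha20.ne', hc0.ne', hμ0.ne']; ring)
      | (rw [h2d]; field_simp [ha20.ne', hc0.ne', hμ0.ne'])
    have h10 : (m/h2)*(h2*(μ*μ-ε*μ)/c) ≤ (m/h2)*(c - ‖x + (1-h2) • y‖) := by
      apply mul_le_mul_of_nonneg_left _ (le_of_lt (div_pos hm0 h20))
      rw [← h9]
      linarith
    have h11 : (m/h2)*(h2*(μ*μ-ε*μ)/c) = m*(μ*μ-ε*μ)/c := by
      first
      | (field_simp [h20.ne', hc0.ne']; ring)
      | field_simp [h20.ne', hc0.ne']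
    linarith
  have hfin : m*(1-ε)/c + m*(μ*μ-ε*μ)/c ≤ m*c := by
    linarith [bA, bB, monA, monB, mid]
  have hfin2 : m*((1-ε) + (μ*μ-ε*μ)) ≤ m*(c*c) := by
    have h10 : (m*(1-ε)/c + m*(μ*μ-ε*μ)/c)*c = m*((1-ε) + (μ*μ-ε*μ)) := by
      first
      | (field_simp [hc0.ne']; ring)
      | field_simp [hc0.ne']
    calc m*((1-ε) + (μ*μ-ε*μ)) = (m*(1-ε)/c + m*(μ*μ-ε*μ)/c)*c := h10.symm
      _ ≤ (m*c)*c := mul_le_mul_of_nonneg_right hfin (le_of_lt hc0)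
      _ = m*(c*c) := by ring
  have := le_of_mul_le_mul_left hfin2 hm0
  linarith

lemma pyth (hH : ∀ x : X, ‖x‖ = 1 → ∀ r : ℝ, 0 < r → IsCPPConst x x r 1)
    {p q : X} (hbj : BJOrth p q) : ‖p + q‖^2 = ‖p‖^2 + ‖q‖^2 := by
  rcases eq_or_ne p 0 with rfl | hp0
  · simp
  rcases eq_or_ne q 0 with rfl | hq0
  · simp
  set t := ‖p‖ with htd
  have ht0 : 0 < t := norm_pos_iff.mpr hp0
  set x := (t:ℝ)⁻¹ • p with hxd
  set y := (t:ℝ)⁻¹ • q with hyd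
  have hx : ‖x‖ = 1 := by
    rw [hxd, norm_smul, Real.norm_eq_abs, abs_of_pos (inv_pos.mpr ht0), ← htd]
    field_simp
  have hy : y ≠ 0 := smul_ne_zero (inv_ne_zero (ne_of_gt ht0)) hq0
  have hxy : BJOrth x y := bj_smul_left (bj_smul_right hbj _) _
  have hyx : BJOrth y x := by
    apply isoToBJ hH
    have h1 := iso hH hxy 1 1
    simp only [one_smul] at h1
    rw [add_comm, h1, norm_sub_rev]
  set c := ‖x + y‖ with hcd
  set μ := ‖y‖ with hμd
  have hc0 : 0 < c := by
    have := hxy 1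
    rw [hx, one_smul] at this
    rw [hcd]; linarith
  have hμ0 : 0 < μ := norm_pos_iff.mpr hy
  have hle : c*c ≤ 1 + μ*μ := by
    by_contra hcon
    push_neg at hcon
    have hδ : 0 < (c*c - (1+μ*μ))/(2*(1+μ)) := by
      apply div_pos (by linarith) (by linarith)
    have hup := pyth_upper hH hx hy hxy hyx hcd.symm hc0 hμd.symm hμ0 hδ
    have harith : ((c*c-(1+μ*μ))/(2*(1+μ)))*(1+μ) = (c*c-(1+μ*μ))/2 := by
      first
      | (field_simp; ring)
      | field_simp
    linarith
  have hge : 1 + μ*μ ≤ c*c := by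
    by_contra hcon
    push_neg at hcon
    have hδ : 0 < ((1+μ*μ) - c*c)/(2*(1+μ)) := by
      apply div_pos (by linarith) (by linarith)
    have hlo := pyth_lower hH hx hy hxy hyx hcd.symm hc0 hμd.symm hμ0 hδ
    have harith : (((1+μ*μ) - c*c)/(2*(1+μ)))*(1+μ) = ((1+μ*μ) - c*c)/2 := by
      first
      | (field_simp; ring)
      | field_simp
    linarith
  have hcc : c*c = 1 + μ*μ := le_antisymm hle hge
  have hpq : ‖p + q‖ = t*c := by
    have e : p + q = t • (x + y) := by
      rw [hxd, hyd, smul_add, smul_smul, smul_smul, mul_inv_cancel₀ (ne_of_gt ht0), one_smul, one_smul]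
    rw [e, norm_smul, Real.norm_eq_abs, abs_of_pos ht0, ← hcd]
  have hqn : ‖q‖ = t*μ := by
    have e : q = t • y := by
      rw [hyd, smul_smul, mul_inv_cancel₀ (ne_of_gt ht0), one_smul]
    rw [e, norm_smul, Real.norm_eq_abs, abs_of_pos ht0, ← hμd]
  rw [hpq, hqn]
  linear_combination (t^2) * hcc

lemma parallelogram (hH : ∀ x : X, ‖x‖ = 1 → ∀ r : ℝ, 0 < r → IsCPPConst x x r 1)
    (u v : X) :
    ‖u + v‖ * ‖u + v‖ + ‖u - v‖ * ‖u - v‖ = 2 * (‖u‖ * ‖u‖ + ‖v‖ * ‖v‖) := by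
  rcases eq_or_ne u 0 with rfl | hu0
  · simp only [zero_add, zero_sub, norm_neg, norm_zero]
    ring
  obtain ⟨α, hbj⟩ := bj_companion hu0 v
  set w := α • u + v with hwd
  have h1 : ‖u + v‖^2 = (1-α)^2*‖u‖^2 + ‖w‖^2 := by
    have e : u + v = (1-α) • u + w := by rw [hwd]; module
    have hb : BJOrth ((1-α) • u) w := bj_smul_left hbj _
    rw [e, pyth hH hb, norm_smul, Real.norm_eq_abs]
    rw [mul_pow, sq_abs]
  have h2 : ‖u - v‖^2 = (1+α)^2*‖u‖^2 + ‖w‖^2 := by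
    have e : u - v = (1+α) • u + -w := by rw [hwd]; module
    have hb : BJOrth ((1+α) • u) (-w) := bj_neg_right (bj_smul_left hbj _)
    rw [e, pyth hH hb, norm_smul, norm_neg, Real.norm_eq_abs]
    rw [mul_pow, sq_abs]
  have h3 : ‖v‖^2 = α^2*‖u‖^2 + ‖w‖^2 := by
    have e : v = (-α) • u + w := by rw [hwd]; module
    have hb : BJOrth ((-α) • u) w := bj_smul_left hbj _
    rw [e, pyth hH hb, norm_smul, Real.norm_eq_abs]
    rw [mul_pow, sq_abs, neg_sq]
  linear_combination h1 + h2 - 2*h3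

end Basic

theorem stmt17 {X : Type*} [NormedAddCommGroup X] [NormedSpace ℝ X] [CompleteSpace X]
    (hdim : 2 ≤ Module.rank ℝ X) :
    Nonempty (InnerProductSpace ℝ X) ↔
      ∀ x : X, ‖x‖ = 1 → ∀ r : ℝ, 0 < r → IsCPPConst x x r 1 := by
  constructor
  · rintro ⟨inst⟩ x hx r hr z hz hxz w hw hxw a b hdist hnorm
    have hpar : ∀ u v : X, ‖u + v‖ * ‖u + v‖ + ‖u - v‖ * ‖u - v‖ =
        2 * (‖u‖ * ‖u‖ + ‖v‖ * ‖v‖) := by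
      letI := inst
      exact fun u v => by have := parallelogram_law_with_norm ℝ u v; simp only [sq] at this; exact this
    letI inst2 : InnerProductSpace ℝ X := InnerProductSpace.ofNorm ℝ hpar
    have key : ∀ u v : X, ‖v‖ = 1 → BJOrth u v → (inner ℝ u v : ℝ) = 0 := by
      intro u v hv huv
      set s : ℝ := -(inner ℝ u v : ℝ) with hsd
      have h1 := huv s
      have h2 : ‖u + s • v‖^2 = ‖u‖^2 - (inner ℝ u v : ℝ)^2 := by
        rw [norm_add_sq_real, real_inner_smul_right, norm_smul, Real.norm_eq_abs, hv]
        rw [hsd]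
        ring_nf
        rw [sq_abs]
        ring
      have h3 : ‖u‖^2 ≤ ‖u + s • v‖^2 := pow_le_pow_left₀ (norm_nonneg u) h1 2
      have h4 : (inner ℝ u v : ℝ)^2 ≤ 0 := by nlinarith
      have := le_antisymm h4 (sq_nonneg _)
      exact (pow_eq_zero_iff two_ne_zero).mp this
    have sqcalc : ∀ v : X, ‖v‖ = 1 → (inner ℝ x v : ℝ) = 0 → ‖a • x + b • v‖^2 = a^2 + b^2 := by
      intro v hv hiv
      calc ‖a • x + b • v‖^2
          = ‖a • x‖^2 + 2 * (inner ℝ (a • x) (b • v) : ℝ) + ‖b • v‖^2 := norm_add_sq_real _ _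
        _ = a^2 + b^2 := by
            rw [norm_smul, norm_smul, hx, hv, real_inner_smul_left, real_inner_smul_right, hiv]
            simp [Real.norm_eq_abs, sq_abs]
    have h1 := sqcalc z hz (key x z hz hxz)
    rw [hnorm] at h1
    have h2 := sqcalc w hw (key x w hw hxw)
    have h3 : ‖a • x + b • w‖^2 = 1 := by
      rw [h2, ← h1, one_pow]
    have h4 : ‖a • x + b • w‖ = 1 := by
      nlinarith [norm_nonneg (a • x + b • w)]
    rw [mul_one, h4]
  · intro hH
    exact ⟨InnerProductSpace.ofNorm ℝ (parallelogram hH)⟩
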